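/- For u, y ∈ R and s ∈ C^{n-1} with y² + ‖s‖² = 1, the curve w_t = (e^u/(1 + y² tanh² t)) · (e^u(1 - y² tanh² t + 2iy tanh t), √2 tanh t (1 + iy tanh t) s) in H satisfies Δ'(w_t, w_t) = 2e^{2u}(1 - tanh² t)/(1 + y² tanh² t) = 8e^{2u}/((1 + y²)(e^{2t} + e^{-2t}) + 2‖s‖²) for all t ∈ R. -/

import Mathlib

open Complex BigOperators

noncomputable section

/-- The sesqui-polynomial `Δ'(z,w) = z₁ + conj w₁ - ⟨z₂, w₂⟩` on
`H ⊆ ℂ × ℂ^{n-1}`. -/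
def DeltaP {m : ℕ} (z w : ℂ × (Fin m → ℂ)) : ℂ :=
  z.1 + (starRingEnd ℂ) w.1 - ∑ i, (starRingEnd ℂ) (w.2 i) * z.2 i

/-- The explicit geodesic
`w_t = (e^u/(1 + y² tanh² t)) · (e^u (1 - y² tanh² t + 2 i y tanh t),
√2 tanh t (1 + i y tanh t) s)` in `H`. -/
def geoCurve {m : ℕ} (u y : ℝ) (s : Fin m → ℂ) (t : ℝ) : ℂ × (Fin m → ℂ) :=
  (((Real.exp u / (1 + y ^ 2 * Real.tanh t ^ 2) : ℝ) : ℂ) *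
      ((Real.exp u : ℂ) *
        (1 - (y : ℂ) ^ 2 * (Real.tanh t : ℂ) ^ 2
          + 2 * Complex.I * (y : ℂ) * (Real.tanh t : ℂ))),
    fun i => ((Real.exp u / (1 + y ^ 2 * Real.tanh t ^ 2) : ℝ) : ℂ) *
      ((Real.sqrt 2 : ℂ) * (Real.tanh t : ℂ) *
        (1 + Complex.I * (y : ℂ) * (Real.tanh t : ℂ)) * s i))

/-- For `u, y ∈ ℝ` and `s ∈ ℂ^{n-1}` with `y² + ‖s‖² = 1`, the
above curve satisfies
`Δ'(w_t, w_t) = 2 e^{2u} (1 - tanh² t)/(1 + y² tanh² t)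
             = 8 e^{2u} / ((1 + y²)(e^{2t} + e^{-2t}) + 2‖s‖²)` for all `t`. -/
theorem stmt13 (m : ℕ) (u y : ℝ) (s : Fin m → ℂ)
    (hys : y ^ 2 + ∑ i, ‖s i‖ ^ 2 = 1) (t : ℝ) :
    DeltaP (geoCurve u y s t) (geoCurve u y s t) =
      ((2 * Real.exp (2 * u) * (1 - Real.tanh t ^ 2) /
        (1 + y ^ 2 * Real.tanh t ^ 2) : ℝ) : ℂ) ∧
    DeltaP (geoCurve u y s t) (geoCurve u y s t) =
      ((8 * Real.exp (2 * u) /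
        ((1 + y ^ 2) * (Real.exp (2 * t) + Real.exp (-(2 * t)))
          + 2 * ∑ i, ‖s i‖ ^ 2) : ℝ) : ℂ) := by
  have hTpos : (0:ℝ) < 1 + y ^ 2 * Real.tanh t ^ 2 := by positivity
  have hTne : (1 : ℝ) + y ^ 2 * Real.tanh t ^ 2 ≠ 0 := ne_of_gt hTpos
  have hTneC : ((1 : ℂ) + (y:ℂ) ^ 2 * (Real.tanh t:ℂ) ^ 2) ≠ 0 := by
    exact_mod_cast Complex.ofReal_ne_zero.mpr hTne
  have hsum : (∑ i, (starRingEnd ℂ) (s i) * s i) = ((1 - y ^ 2 : ℝ) : ℂ) := by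
    have h1 : ∀ i, (starRingEnd ℂ) (s i) * s i = ((‖s i‖ ^ 2 : ℝ) : ℂ) := by
      intro i; rw [Complex.conj_mul']; push_cast; ring
    simp only [h1, ← Complex.ofReal_sum]
    congr 1; linarith
  have hsq2 : ((Real.sqrt 2 : ℝ)) ^ 2 = 2 := Real.sq_sqrt (by norm_num)
  have step : ∀ (c k : ℂ), ∑ i, (starRingEnd ℂ) (c * (k * s i)) * (c * (k * s i))
      = (starRingEnd ℂ) (c * k) * (c * k) * ((1 - y ^ 2 : ℝ):ℂ) := by
    intro c k
    rw [← hsum, Finset.mul_sum]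
    refine Finset.sum_congr rfl fun i _ => ?_
    simp only [map_mul]; ring
  have key : DeltaP (geoCurve u y s t) (geoCurve u y s t) =
      ((2 * Real.exp (2 * u) * (1 - Real.tanh t ^ 2) /
        (1 + y ^ 2 * Real.tanh t ^ 2) : ℝ) : ℂ) := by
    simp only [DeltaP, geoCurve]
    rw [step]
    simp only [map_mul, map_add, map_sub, map_one, Complex.conj_ofReal, Complex.conj_I,
      map_ofNat, map_pow]
    rw [show (2:ℝ) * u = u + u by ring, Real.exp_add]
    generalize Real.exp u = a at *
    generalize hT : Real.tanh t = T at *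
    generalize hr : Real.sqrt 2 = r at *
    push_cast
    have hrC : ((r:ℝ):ℂ) ^ 2 = 2 := by exact_mod_cast Complex.ofReal_inj.mpr hsq2
    field_simp [hTneC]
    ring_nf
    simp only [Complex.I_sq, hrC]
    ring_nf
  refine ⟨key, key.trans ?_⟩
  have hS : (∑ i, ‖s i‖ ^ 2) = 1 - y ^ 2 := by linarith
  rw [hS]
  norm_cast
  have hprod : Real.exp (2 * t) * Real.exp (-(2 * t)) = 1 := by
    rw [← Real.exp_add]; simp
  have hden : (1 + y ^ 2) * (Real.exp (2 * t) + Real.exp (-(2 * t))) + 2 * (1 - y ^ 2) ≠ 0 := by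
    nlinarith [sq_nonneg (Real.exp (2 * t) - 1), Real.exp_pos (-(2 * t)), Real.exp_pos (2 * t),
      sq_nonneg y]
  rw [div_eq_div_iff hTne hden]
  have hc : Real.cosh t ≠ 0 := (Real.cosh_pos t).ne'
  have hcsq : Real.cosh t ^ 2 = Real.sinh t ^ 2 + 1 := Real.cosh_sq t
  have hexp : Real.exp (2 * t) + Real.exp (-(2 * t)) = 2 * (2 * Real.cosh t ^ 2 - 1) := by
    have h1 : Real.exp (2 * t) = Real.exp t ^ 2 := by
      rw [two_mul, Real.exp_add, sq]
    have h2 : Real.exp (-(2 * t)) = Real.exp (-t) ^ 2 := by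
      rw [show -(2 * t) = -t + -t by ring, Real.exp_add, sq]
    have h3 : Real.exp t * Real.exp (-t) = 1 := by rw [← Real.exp_add]; simp
    rw [Real.cosh_eq, h1, h2]
    nlinarith [h3]
  rw [hexp, Real.tanh_eq_sinh_div_cosh]
  field_simp
  linear_combination (8 * (Real.cosh t ^ 2 + y ^ 2 * Real.cosh t ^ 2)) * hcsq
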